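/- Let D ≥ 1 and for each d ∈ {1, …, D} let μ_{q,d}, μ_{π,d} ∈ ℝ and σ_{q,d}, σ_{π,d} > 0. Define the product normal densities q(θ) = Π_{d=1}^D φ(θ_d; μ_{q,d}, σ_{q,d}²) and π(θ) = Π_{d=1}^D φ(θ_d; μ_{π,d}, σ_{π,d}²) on ℝ^D. Then the Fisher divergence FD(q‖π) := ∫_{ℝ^D} ‖∇_θ log q(θ) − ∇_θ log π(θ)‖₂² q(θ) dθ equals Σ_{d=1}^D [ C_{1,d}² + 2 C_{1,d} C_{2,d} μ_{q,d} + C_{2,d}² (σ_{q,d}² + μ_{q,d}²) ], where C_{1,d} = μ_{q,d}/σ_{q,d}² − μ_{π,d}/σ_{π,d}² and C_{2,d} = 1/σ_{π,d}² − 1/σ_{q,d}². -/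

import Mathlib

open MeasureTheory

/-- The density of the univariate normal distribution `N(m, s²)`:
`φ(θ; m, s²) = (2π s²)^{−1/2} exp(−(θ−m)²/(2 s²))`. -/
noncomputable def normalPDF (m s θ : ℝ) : ℝ :=
  (Real.sqrt (2 * Real.pi * s ^ 2))⁻¹ * Real.exp (-(θ - m) ^ 2 / (2 * s ^ 2))

namespace FisherAux

open Real

lemma normalPDF_eq (m s θ : ℝ) :
    normalPDF m s θ =
      (Real.sqrt (2 * π * s ^ 2))⁻¹ * Real.exp (-(2 * s ^ 2)⁻¹ * (θ - m) ^ 2) := by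
  unfold normalPDF
  congr 1
  rw [neg_div, div_eq_inv_mul, ← neg_mul]

lemma normalPDF_pos (m s θ : ℝ) (hs : 0 < s) : 0 < normalPDF m s θ := by
  unfold normalPDF
  have : 0 < Real.sqrt (2 * π * s ^ 2) := Real.sqrt_pos.2 (by positivity)
  positivity

lemma log_normalPDF (m s θ : ℝ) (hs : 0 < s) :
    Real.log (normalPDF m s θ) =
      Real.log (Real.sqrt (2 * π * s ^ 2))⁻¹ + -(θ - m) ^ 2 / (2 * s ^ 2) := by
  unfold normalPDF
  have h1 : (Real.sqrt (2 * π * s ^ 2))⁻¹ ≠ 0 := by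
    have : 0 < Real.sqrt (2 * π * s ^ 2) := Real.sqrt_pos.2 (by positivity)
    positivity
  rw [Real.log_mul h1 (Real.exp_ne_zero _), Real.log_exp]

lemma integral_x_mul_gauss {b : ℝ} (hb : 0 < b) :
    ∫ x : ℝ, x * Real.exp (-b * x ^ 2) = 0 := by
  have hderiv : ∀ x : ℝ, HasDerivAt (fun x : ℝ => -(2 * b)⁻¹ * Real.exp (-b * x ^ 2))
      (x * Real.exp (-b * x ^ 2)) x := by
    intro x
    have h1 : HasDerivAt (fun x : ℝ => -b * x ^ 2) (-b * (2 * x)) x := by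
      simpa using ((hasDerivAt_pow 2 x).const_mul (-b))
    have h2 := (h1.exp).const_mul (-(2 * b)⁻¹)
    refine h2.congr_deriv ?_
    field_simp
  exact integral_eq_zero_of_hasDerivAt_of_integrable hderiv
    (integrable_mul_exp_neg_mul_sq hb) ((integrable_exp_neg_mul_sq hb).const_mul _)

lemma integrable_sq_mul_gauss {b : ℝ} (hb : 0 < b) :
    Integrable (fun x : ℝ => x ^ 2 * Real.exp (-b * x ^ 2)) := by
  have := integrable_rpow_mul_exp_neg_mul_sq hb (s := 2) (by norm_num)
  refine this.congr ?_
  filter_upwards with x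
  rw [show ((2:ℝ) : ℝ) = ((2:ℕ) : ℝ) by norm_num, Real.rpow_natCast]

lemma integral_x_sq_mul_gauss {b : ℝ} (hb : 0 < b) :
    ∫ x : ℝ, x ^ 2 * Real.exp (-b * x ^ 2) = (2 * b)⁻¹ * Real.sqrt (π / b) := by
  have hderiv : ∀ x : ℝ, HasDerivAt (fun x : ℝ => x * Real.exp (-b * x ^ 2))
      (Real.exp (-b * x ^ 2) - 2 * b * (x ^ 2 * Real.exp (-b * x ^ 2))) x := by
    intro x
    have h1 : HasDerivAt (fun x : ℝ => -b * x ^ 2) (-b * (2 * x)) x := by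
      simpa using ((hasDerivAt_pow 2 x).const_mul (-b))
    have h2 := (hasDerivAt_id x).mul h1.exp
    refine h2.congr_deriv ?_
    simp only [id]
    ring
  have hfe : Integrable (fun x : ℝ => Real.exp (-b * x ^ 2)) := integrable_exp_neg_mul_sq hb
  have hfs : Integrable (fun x : ℝ => x ^ 2 * Real.exp (-b * x ^ 2)) := integrable_sq_mul_gauss hb
  have h0 : ∫ x : ℝ, (Real.exp (-b * x ^ 2) - 2 * b * (x ^ 2 * Real.exp (-b * x ^ 2))) = 0 :=
    integral_eq_zero_of_hasDerivAt_of_integrable hderiv (hfe.sub (hfs.const_mul _))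
      (integrable_mul_exp_neg_mul_sq hb)
  rw [integral_sub hfe (hfs.const_mul _), integral_const_mul, integral_gaussian, sub_eq_zero] at h0
  have hb' : (2 * b) ≠ 0 := by positivity
  field_simp at h0 ⊢
  linarith [h0]

lemma gauss_poly_expand (A B c b : ℝ) (x : ℝ) :
    (A + B * x) ^ 2 * (c * Real.exp (-b * x ^ 2)) =
      (A ^ 2 * c) * Real.exp (-b * x ^ 2) + (2 * A * B * c) * (x * Real.exp (-b * x ^ 2)) +
        (B ^ 2 * c) * (x ^ 2 * Real.exp (-b * x ^ 2)) := by ring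

lemma integrable_gauss_poly {b : ℝ} (A B c : ℝ) (hb : 0 < b) :
    Integrable (fun x : ℝ => (A + B * x) ^ 2 * (c * Real.exp (-b * x ^ 2))) := by
  simp_rw [gauss_poly_expand]
  exact (((integrable_exp_neg_mul_sq hb).const_mul _).add
    ((integrable_mul_exp_neg_mul_sq hb).const_mul _)).add
    ((integrable_sq_mul_gauss hb).const_mul _)

lemma integral_gauss_poly {b : ℝ} (A B c : ℝ) (hb : 0 < b) :
    ∫ x : ℝ, (A + B * x) ^ 2 * (c * Real.exp (-b * x ^ 2)) =
      A ^ 2 * (c * Real.sqrt (π / b)) + B ^ 2 * ((2 * b)⁻¹ * (c * Real.sqrt (π / b))) := by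
  simp_rw [gauss_poly_expand]
  have I1 : Integrable (fun x : ℝ => (A ^ 2 * c) * Real.exp (-b * x ^ 2)) :=
    (integrable_exp_neg_mul_sq hb).const_mul _
  have I2 : Integrable (fun x : ℝ => (2 * A * B * c) * (x * Real.exp (-b * x ^ 2))) :=
    (integrable_mul_exp_neg_mul_sq hb).const_mul _
  have I3 : Integrable (fun x : ℝ => (B ^ 2 * c) * (x ^ 2 * Real.exp (-b * x ^ 2))) :=
    (integrable_sq_mul_gauss hb).const_mul _
  have I12 : Integrable (fun x : ℝ => (A ^ 2 * c) * Real.exp (-b * x ^ 2) +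
      (2 * A * B * c) * (x * Real.exp (-b * x ^ 2))) := I1.add I2
  rw [integral_add I12 I3, integral_add I1 I2,
    integral_const_mul, integral_const_mul, integral_const_mul,
    integral_gaussian, integral_x_mul_gauss hb, integral_x_sq_mul_gauss hb]
  ring

lemma sqrt_two_pi_sq_mul (s : ℝ) (hs : 0 < s) :
    (Real.sqrt (2 * π * s ^ 2))⁻¹ * Real.sqrt (π / (2 * s ^ 2)⁻¹) = 1 := by
  rw [show π / (2 * s ^ 2)⁻¹ = 2 * π * s ^ 2 by field_simp]
  rw [inv_mul_cancel₀]
  positivity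

lemma shift_key (C1 C2 m s : ℝ) (t : ℝ) :
    (C1 + C2 * m + C2 * (t - m)) ^ 2 *
        ((Real.sqrt (2 * π * s ^ 2))⁻¹ * Real.exp (-(2 * s ^ 2)⁻¹ * (t - m) ^ 2)) =
      (C1 + C2 * t) ^ 2 * normalPDF m s t := by
  rw [normalPDF_eq]
  ring

lemma integrable_normalPDF (m s : ℝ) (hs : 0 < s) : Integrable (normalPDF m s) := by
  have hb : 0 < (2 * s ^ 2)⁻¹ := by positivity
  have h : Integrable (fun x : ℝ =>
      (Real.sqrt (2 * π * s ^ 2))⁻¹ * Real.exp (-(2 * s ^ 2)⁻¹ * x ^ 2)) :=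
    (integrable_exp_neg_mul_sq hb).const_mul _
  have h2 := h.comp_sub_right m
  refine h2.congr (Filter.Eventually.of_forall fun x => ?_)
  rw [normalPDF_eq]

lemma integral_normalPDF (m s : ℝ) (hs : 0 < s) : ∫ t, normalPDF m s t = 1 := by
  have hb : 0 < (2 * s ^ 2)⁻¹ := by positivity
  simp_rw [normalPDF_eq]
  rw [show (∫ t : ℝ, (Real.sqrt (2 * π * s ^ 2))⁻¹ * Real.exp (-(2 * s ^ 2)⁻¹ * (t - m) ^ 2))
      = ∫ t : ℝ, (fun x => (Real.sqrt (2 * π * s ^ 2))⁻¹ *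
          Real.exp (-(2 * s ^ 2)⁻¹ * x ^ 2)) (t - m)
      from rfl,
    integral_sub_right_eq_self (μ := volume)
      (fun x => (Real.sqrt (2 * π * s ^ 2))⁻¹ * Real.exp (-(2 * s ^ 2)⁻¹ * x ^ 2)) m,
    integral_const_mul, integral_gaussian]
  exact sqrt_two_pi_sq_mul s hs

lemma integrable_key (C1 C2 m s : ℝ) (hs : 0 < s) :
    Integrable (fun t : ℝ => (C1 + C2 * t) ^ 2 * normalPDF m s t) := by
  have hb : 0 < (2 * s ^ 2)⁻¹ := by positivity
  have h := (integrable_gauss_poly (C1 + C2 * m) C2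
    (Real.sqrt (2 * π * s ^ 2))⁻¹ hb).comp_sub_right m
  exact h.congr (Filter.Eventually.of_forall fun t => shift_key C1 C2 m s t)

lemma integral_key (C1 C2 m s : ℝ) (hs : 0 < s) :
    ∫ t : ℝ, (C1 + C2 * t) ^ 2 * normalPDF m s t =
      C1 ^ 2 + 2 * C1 * C2 * m + C2 ^ 2 * (s ^ 2 + m ^ 2) := by
  have hb : 0 < (2 * s ^ 2)⁻¹ := by positivity
  have h2 : (2 * (2 * s ^ 2)⁻¹)⁻¹ = s ^ 2 := by
    rw [mul_inv, inv_inv]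
    field_simp
  calc ∫ t : ℝ, (C1 + C2 * t) ^ 2 * normalPDF m s t
      = ∫ t : ℝ, (fun x : ℝ => (C1 + C2 * m + C2 * x) ^ 2 *
          ((Real.sqrt (2 * π * s ^ 2))⁻¹ * Real.exp (-(2 * s ^ 2)⁻¹ * x ^ 2))) (t - m) := by
        refine integral_congr_ae (Filter.Eventually.of_forall fun t => ?_)
        exact (shift_key C1 C2 m s t).symm
    _ = ∫ x : ℝ, (C1 + C2 * m + C2 * x) ^ 2 *
          ((Real.sqrt (2 * π * s ^ 2))⁻¹ * Real.exp (-(2 * s ^ 2)⁻¹ * x ^ 2)) :=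
        integral_sub_right_eq_self (μ := volume) (fun x : ℝ => (C1 + C2 * m + C2 * x) ^ 2 *
          ((Real.sqrt (2 * π * s ^ 2))⁻¹ * Real.exp (-(2 * s ^ 2)⁻¹ * x ^ 2))) m
    _ = (C1 + C2 * m) ^ 2 * 1 + C2 ^ 2 * (s ^ 2 * 1) := by
        rw [integral_gauss_poly _ _ _ hb, sqrt_two_pi_sq_mul s hs, h2]
    _ = C1 ^ 2 + 2 * C1 * C2 * m + C2 ^ 2 * (s ^ 2 + m ^ 2) := by ring

lemma gradient_log_prod (D : ℕ) (μ σ : Fin D → ℝ) (hσ : ∀ d, 0 < σ d)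
    (θ : EuclideanSpace ℝ (Fin D)) :
    gradient (fun t : EuclideanSpace ℝ (Fin D) =>
        Real.log (∏ d, normalPDF (μ d) (σ d) (t d))) θ =
      (EuclideanSpace.equiv (Fin D) ℝ).symm (fun d => -(θ d - μ d) / σ d ^ 2) := by
  have hfun : (fun t : EuclideanSpace ℝ (Fin D) =>
      Real.log (∏ d, normalPDF (μ d) (σ d) (t d))) =
      fun t : EuclideanSpace ℝ (Fin D) =>
        ∑ d, (Real.log (Real.sqrt (2 * π * σ d ^ 2))⁻¹ + -(t d - μ d) ^ 2 / (2 * σ d ^ 2)) := by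
    funext t
    rw [Real.log_prod (fun d _ => (normalPDF_pos (μ d) (σ d) (t d) (hσ d)).ne')]
    exact Finset.sum_congr rfl fun d _ => log_normalPDF _ _ _ (hσ d)
  rw [hfun]
  refine HasGradientAt.gradient ?_
  rw [hasGradientAt_iff_hasFDerivAt]
  have hL : (InnerProductSpace.toDual ℝ (EuclideanSpace ℝ (Fin D)))
      ((EuclideanSpace.equiv (Fin D) ℝ).symm (fun d => -(θ d - μ d) / σ d ^ 2)) =
      ∑ d, (-(θ d - μ d) / σ d ^ 2) • (EuclideanSpace.proj d :
        EuclideanSpace ℝ (Fin D) →L[ℝ] ℝ) := by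
    apply ContinuousLinearMap.ext
    intro w
    simp [InnerProductSpace.toDual_apply_apply, PiLp.inner_apply, RCLike.inner_apply,
      PiLp.proj_apply, mul_comm]
  rw [hL]
  apply HasFDerivAt.fun_sum
  intro d _
  have hd : HasDerivAt (fun x : ℝ =>
      Real.log (Real.sqrt (2 * π * σ d ^ 2))⁻¹ + -(x - μ d) ^ 2 / (2 * σ d ^ 2))
      (-(θ d - μ d) / σ d ^ 2) (θ d) := by
    have h1 : HasDerivAt (fun x : ℝ => (x - μ d) ^ 2) (2 * (θ d - μ d)) (θ d) := by
      have := (hasDerivAt_pow 2 (θ d - μ d)).comp (θ d) ((hasDerivAt_id (θ d)).sub_const (μ d))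
      exact this.congr_deriv (by norm_num)
    have h2 := ((h1.neg).div_const (2 * σ d ^ 2)).const_add
      (Real.log (Real.sqrt (2 * π * σ d ^ 2))⁻¹)
    refine h2.congr_deriv ?_
    have hσd := (hσ d).ne'
    field_simp
  have hp0 := ContinuousLinearMap.hasFDerivAt
    (f := (EuclideanSpace.proj d : EuclideanSpace ℝ (Fin D) →L[ℝ] ℝ)) (x := θ)
  have hp : HasFDerivAt (fun y : EuclideanSpace ℝ (Fin D) => y d)
      (EuclideanSpace.proj d : EuclideanSpace ℝ (Fin D) →L[ℝ] ℝ) θ := hp0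
  exact HasDerivAt.comp_hasFDerivAt (f := fun y : EuclideanSpace ℝ (Fin D) => y d) θ hd hp

section
variable {D : ℕ} (μ σ : Fin D → ℝ) (d : Fin D) (A B : ℝ)

noncomputable def gfun (μ σ : Fin D → ℝ) (d : Fin D) (A B : ℝ) : Fin D → ℝ → ℝ :=
  fun j => if j = d then (fun t => (A + B * t) ^ 2 * normalPDF (μ d) (σ d) t)
    else normalPDF (μ j) (σ j)

lemma gfun_prod (x : Fin D → ℝ) :
    ∏ j, gfun μ σ d A B j (x j) =
      (A + B * x d) ^ 2 * ∏ j, normalPDF (μ j) (σ j) (x j) := by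
  rw [← Finset.mul_prod_erase Finset.univ (fun j => gfun μ σ d A B j (x j)) (Finset.mem_univ d),
    ← Finset.mul_prod_erase Finset.univ (fun j => normalPDF (μ j) (σ j) (x j))
      (Finset.mem_univ d)]
  have h1 : gfun μ σ d A B d = fun t => (A + B * t) ^ 2 * normalPDF (μ d) (σ d) t :=
    if_pos rfl
  have h2 : ∀ j ∈ Finset.univ.erase d, gfun μ σ d A B j (x j) =
      normalPDF (μ j) (σ j) (x j) := by
    intro j hj
    unfold gfun
    rw [if_neg (Finset.ne_of_mem_erase hj)]
  rw [h1, Finset.prod_congr rfl h2]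
  ring

lemma gfun_integrable (hσ : ∀ j, 0 < σ j) (j : Fin D) :
    Integrable (gfun μ σ d A B j) := by
  unfold gfun
  by_cases h : j = d
  · rw [if_pos h]; exact integrable_key A B (μ d) (σ d) (hσ d)
  · rw [if_neg h]; exact integrable_normalPDF (μ j) (σ j) (hσ j)

lemma pi_term_integrable (hσ : ∀ j, 0 < σ j) :
    Integrable (fun x : Fin D → ℝ =>
      (A + B * x d) ^ 2 * ∏ j, normalPDF (μ j) (σ j) (x j)) := by
  have h : Integrable (fun x : Fin D → ℝ => ∏ j, gfun μ σ d A B j (x j)) :=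
    Integrable.fintype_prod (fun j => gfun_integrable μ σ d A B hσ j)
  exact h.congr (Filter.Eventually.of_forall fun x => gfun_prod μ σ d A B x)

lemma pi_term_integral (hσ : ∀ j, 0 < σ j) :
    (∫ x : Fin D → ℝ, (A + B * x d) ^ 2 * ∏ j, normalPDF (μ j) (σ j) (x j)) =
      A ^ 2 + 2 * A * B * μ d + B ^ 2 * (σ d ^ 2 + μ d ^ 2) := by
  calc (∫ x : Fin D → ℝ, (A + B * x d) ^ 2 * ∏ j, normalPDF (μ j) (σ j) (x j))
      = ∫ x : Fin D → ℝ, ∏ j, gfun μ σ d A B j (x j) :=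
        (integral_congr_ae (Filter.Eventually.of_forall fun x =>
          (gfun_prod μ σ d A B x).symm)).symm.symm
    _ = ∏ j, ∫ t : ℝ, gfun μ σ d A B j t := integral_fintype_prod_eq_prod _
    _ = A ^ 2 + 2 * A * B * μ d + B ^ 2 * (σ d ^ 2 + μ d ^ 2) := by
        rw [← Finset.mul_prod_erase Finset.univ (fun j => ∫ t : ℝ, gfun μ σ d A B j t)
          (Finset.mem_univ d)]
        have h1 : (∫ t : ℝ, gfun μ σ d A B d t) =
            A ^ 2 + 2 * A * B * μ d + B ^ 2 * (σ d ^ 2 + μ d ^ 2) := by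
          unfold gfun
          rw [if_pos rfl]
          exact integral_key A B (μ d) (σ d) (hσ d)
        have h2 : ∏ j ∈ Finset.univ.erase d, (∫ t : ℝ, gfun μ σ d A B j t) = 1 := by
          refine Finset.prod_eq_one fun j hj => ?_
          unfold gfun
          rw [if_neg (Finset.ne_of_mem_erase hj)]
          exact integral_normalPDF (μ j) (σ j) (hσ j)
        rw [h1, h2, mul_one]
end

end FisherAux

/-- **Closed form of the Fisher divergence between mean-field normal densities.** -/
theorem fisher_divergence_mean_field_normal_closed_form
    (D : ℕ) (hD : 1 ≤ D)
    (μq μπ σq σπ : Fin D → ℝ) (hσq : ∀ d, 0 < σq d) (hσπ : ∀ d, 0 < σπ d) :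
    (∫ θ : EuclideanSpace ℝ (Fin D),
        ‖gradient (fun t : EuclideanSpace ℝ (Fin D) =>
            Real.log (∏ d, normalPDF (μq d) (σq d) (t d))) θ -
          gradient (fun t : EuclideanSpace ℝ (Fin D) =>
            Real.log (∏ d, normalPDF (μπ d) (σπ d) (t d))) θ‖ ^ 2 *
        (∏ d, normalPDF (μq d) (σq d) (θ d))) =
    ∑ d, ((μq d / σq d ^ 2 - μπ d / σπ d ^ 2) ^ 2 +
      2 * (μq d / σq d ^ 2 - μπ d / σπ d ^ 2) * (1 / σπ d ^ 2 - 1 / σq d ^ 2) * μq d +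
      (1 / σπ d ^ 2 - 1 / σq d ^ 2) ^ 2 * (σq d ^ 2 + μq d ^ 2)) := by
  classical
  set C1 : Fin D → ℝ := fun d => μq d / σq d ^ 2 - μπ d / σπ d ^ 2 with hC1
  set C2 : Fin D → ℝ := fun d => 1 / σπ d ^ 2 - 1 / σq d ^ 2 with hC2
  -- Step 1: pointwise simplification of the integrand
  have hpt : ∀ θ : EuclideanSpace ℝ (Fin D),
      ‖gradient (fun t : EuclideanSpace ℝ (Fin D) =>
          Real.log (∏ d, normalPDF (μq d) (σq d) (t d))) θ -
        gradient (fun t : EuclideanSpace ℝ (Fin D) =>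
          Real.log (∏ d, normalPDF (μπ d) (σπ d) (t d))) θ‖ ^ 2 *
        (∏ d, normalPDF (μq d) (σq d) (θ d)) =
      (∑ d, (C1 d + C2 d * θ d) ^ 2) * ∏ d, normalPDF (μq d) (σq d) (θ d) := by
    intro θ
    rw [FisherAux.gradient_log_prod D μq σq hσq θ, FisherAux.gradient_log_prod D μπ σπ hσπ θ]
    congr 1
    rw [EuclideanSpace.norm_eq, Real.sq_sqrt (Finset.sum_nonneg fun d _ => by positivity)]
    refine Finset.sum_congr rfl fun d _ => ?_
    have hcoord : ((EuclideanSpace.equiv (Fin D) ℝ).symm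
          (fun d => -(θ d - μq d) / σq d ^ 2) -
        (EuclideanSpace.equiv (Fin D) ℝ).symm
          (fun d => -(θ d - μπ d) / σπ d ^ 2)) d =
        -(θ d - μq d) / σq d ^ 2 - -(θ d - μπ d) / σπ d ^ 2 := rfl
    rw [hcoord, Real.norm_eq_abs, sq_abs]
    have h1 : -(θ d - μq d) / σq d ^ 2 - -(θ d - μπ d) / σπ d ^ 2 = C1 d + C2 d * θ d := by
      have hq := (hσq d).ne'
      have hp := (hσπ d).ne'
      rw [hC1, hC2]
      field_simp
      ring
    rw [h1]
  rw [integral_congr_ae (Filter.Eventually.of_forall hpt)]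
  -- Step 2: transfer to the product space
  have hmp := (EuclideanSpace.volume_preserving_symm_measurableEquiv_toLp (Fin D)).symm
  rw [← hmp.integral_comp (MeasurableEquiv.measurableEmbedding _)
      (fun θ : EuclideanSpace ℝ (Fin D) =>
        (∑ d, (C1 d + C2 d * θ d) ^ 2) * ∏ d, normalPDF (μq d) (σq d) (θ d))]
  show (∫ x : Fin D → ℝ,
      (∑ d, (C1 d + C2 d * x d) ^ 2) * ∏ d, normalPDF (μq d) (σq d) (x d)) = _
  -- Step 3: Fubini term by term
  simp_rw [Finset.sum_mul]
  rw [integral_finset_sum Finset.univ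
    (fun d _ => FisherAux.pi_term_integrable μq σq d (C1 d) (C2 d) hσq)]
  exact Finset.sum_congr rfl fun d _ => FisherAux.pi_term_integral μq σq d (C1 d) (C2 d) hσq
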